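/- Let A = ⋃_{i∈ℤ} (a_i, b_i) ⊂ ℝ be a disjoint union of open intervals with b_i < a_{i+1}, such that all intervals have the same length (d(a_i, b_i) = d(a_{i+1}, b_{i+1}) for all i) and all gaps have the same length (d(b_i, a_{i+1}) = d(b_{i-1}, a_i) for all i). Then (A, d) with the Euclidean metric is plastic. -/

import Mathlib

def NonexpOn (φ : ℝ → ℝ) (A : Set ℝ) : Prop :=
  ∀ x ∈ A, ∀ y ∈ A, dist (φ x) (φ y) ≤ dist x y

def IsomOn (φ : ℝ → ℝ) (A : Set ℝ) : Prop :=
  ∀ x ∈ A, ∀ y ∈ A, dist (φ x) (φ y) = dist x y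

def Plastic (A : Set ℝ) : Prop :=
  ∀ φ : ℝ → ℝ, Set.BijOn φ A A → NonexpOn φ A → IsomOn φ A


lemma ioo_strictMonoOn {φ : ℝ → ℝ} {α β p1 p2 : ℝ}
    (hcont : ContinuousOn φ (Set.Ioo α β)) (hinj : Set.InjOn φ (Set.Ioo α β))
    (hp1 : p1 ∈ Set.Ioo α β) (hp2 : p2 ∈ Set.Ioo α β) (h12 : p1 < p2) (hφ : φ p1 < φ p2) :
    StrictMonoOn φ (Set.Ioo α β) := by
  intro u hu v hv huv
  have hsub : Set.Icc (min u p1) (max v p2) ⊆ Set.Ioo α β := by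
    intro z hz
    exact ⟨lt_of_lt_of_le (lt_min hu.1 hp1.1) hz.1, lt_of_le_of_lt hz.2 (max_lt hv.2 hp2.2)⟩
  have hmm : min u p1 ≤ max v p2 :=
    le_trans (min_le_left _ _) (le_trans huv.le (le_max_left _ _))
  have hu' : u ∈ Set.Icc (min u p1) (max v p2) :=
    ⟨min_le_left _ _, le_trans huv.le (le_max_left _ _)⟩
  have hv' : v ∈ Set.Icc (min u p1) (max v p2) :=
    ⟨le_trans (min_le_left _ _) huv.le, le_max_left _ _⟩
  have hp1' : p1 ∈ Set.Icc (min u p1) (max v p2) :=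
    ⟨min_le_right _ _, le_trans h12.le (le_max_right _ _)⟩
  have hp2' : p2 ∈ Set.Icc (min u p1) (max v p2) :=
    ⟨le_trans (min_le_right _ _) h12.le, le_max_right _ _⟩
  rcases ContinuousOn.strictMonoOn_of_injOn_Icc' hmm (hcont.mono hsub) (hinj.mono hsub) with hm | hm
  · exact hm hu' hv' huv
  · exact absurd hφ (not_lt.2 (hm hp1' hp2' h12).le)

lemma ioo_dichotomy {φ : ℝ → ℝ} {α β : ℝ}
    (hcont : ContinuousOn φ (Set.Ioo α β)) (hinj : Set.InjOn φ (Set.Ioo α β)) :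
    StrictMonoOn φ (Set.Ioo α β) ∨ StrictAntiOn φ (Set.Ioo α β) := by
  rcases le_or_gt β α with hβα | hαβ
  · left
    intro u hu v hv huv
    rw [Set.Ioo_eq_empty (not_lt.2 hβα)] at hu
    exact absurd hu (Set.notMem_empty u)
  · have hp1 : α + (β - α)/3 ∈ Set.Ioo α β := ⟨by linarith, by linarith⟩
    have hp2 : α + 2*(β - α)/3 ∈ Set.Ioo α β := ⟨by linarith, by linarith⟩
    have h12 : α + (β - α)/3 < α + 2*(β - α)/3 := by linarith
    rcases lt_trichotomy (φ (α + (β - α)/3)) (φ (α + 2*(β - α)/3)) with h | h | h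
    · exact Or.inl (ioo_strictMonoOn hcont hinj hp1 hp2 h12 h)
    · exact absurd (hinj hp1 hp2 h) (ne_of_lt h12)
    · right
      have hm := ioo_strictMonoOn (φ := fun x => -φ x) hcont.neg
        (fun x hx y hy he => hinj hx hy (neg_inj.1 he)) hp1 hp2 h12
        (by exact neg_lt_neg h)
      intro u hu v hv huv
      have := hm hu hv huv
      simpa using this

lemma isOpen_image_ioo {φ : ℝ → ℝ} {α β : ℝ}
    (hcont : ContinuousOn φ (Set.Ioo α β))
    (hd : StrictMonoOn φ (Set.Ioo α β) ∨ StrictAntiOn φ (Set.Ioo α β)) :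
    IsOpen (φ '' Set.Ioo α β) := by
  rw [isOpen_iff_mem_nhds]
  rintro w ⟨z, hz, rfl⟩
  have hu : (α + z)/2 ∈ Set.Ioo α β := ⟨by linarith [hz.1], by linarith [hz.1, hz.2]⟩
  have hv : (z + β)/2 ∈ Set.Ioo α β := ⟨by linarith [hz.1, hz.2], by linarith [hz.2]⟩
  have huz : (α + z)/2 < z := by linarith [hz.1]
  have hzv : z < (z + β)/2 := by linarith [hz.2]
  have hsub2 : Set.Icc ((α + z)/2) ((z + β)/2) ⊆ Set.Ioo α β :=
    fun t ht => ⟨lt_of_lt_of_le hu.1 ht.1, lt_of_le_of_lt ht.2 hv.2⟩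
  have hsub3 : Set.Ioo ((α + z)/2) ((z + β)/2) ⊆ Set.Ioo α β :=
    fun t ht => ⟨lt_trans hu.1 ht.1, lt_trans ht.2 hv.2⟩
  rcases hd with hm | hm
  · have himg := intermediate_value_Ioo (le_of_lt (lt_trans huz hzv)) (hcont.mono hsub2)
    exact Filter.mem_of_superset (Ioo_mem_nhds (hm hu hz huz) (hm hz hv hzv))
      (himg.trans (Set.image_mono hsub3))
  · have himg := intermediate_value_Ioo' (le_of_lt (lt_trans huz hzv)) (hcont.mono hsub2)
    exact Filter.mem_of_superset (Ioo_mem_nhds (hm hz hv hzv) (hm hu hz huz))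
      (himg.trans (Set.image_mono hsub3))

lemma affine_of_mono {φ : ℝ → ℝ} {α β γ δ : ℝ} (hαβ : α < β) (hlen : β - α = δ - γ)
    (hmaps : ∀ x ∈ Set.Ioo α β, φ x ∈ Set.Ioo γ δ)
    (hsurj : ∀ w ∈ Set.Ioo γ δ, ∃ x ∈ Set.Ioo α β, φ x = w)
    (hne : ∀ x ∈ Set.Ioo α β, ∀ y ∈ Set.Ioo α β, |φ x - φ y| ≤ |x - y|)
    (hmono : StrictMonoOn φ (Set.Ioo α β)) :
    ∀ x ∈ Set.Ioo α β, φ x = x + (γ - α) := by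
  intro x hx
  obtain ⟨hφ1, hφ2⟩ := hmaps x hx
  have h1 : δ - φ x ≤ β - x := by
    by_contra hcon
    push_neg at hcon
    obtain ⟨y, hy, hyw⟩ := hsurj ((φ x + (β - x) + δ)/2)
      ⟨lt_trans hφ1 (by linarith [hx.2]), by linarith [hx.2]⟩
    have hwx : φ x < φ y := by rw [hyw]; linarith [hx.2]
    have hxy : x < y := by
      by_contra h
      push_neg at h
      rcases eq_or_lt_of_le h with h' | h'
      · rw [h'] at hwx; exact lt_irrefl _ hwx
      · exact lt_asymm hwx (hmono hy hx h')
    have h3 : φ y - φ x ≤ y - x := by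
      have := le_trans (le_abs_self _) (hne y hy x hx)
      rwa [abs_of_pos (by linarith : (0:ℝ) < y - x)] at this
    rw [hyw] at h3
    linarith [hy.2]
  have h2 : φ x - γ ≤ x - α := by
    by_contra hcon
    push_neg at hcon
    obtain ⟨y, hy, hyw⟩ := hsurj ((γ + (φ x - (x - α)))/2)
      ⟨by linarith [hx.1], by linarith [hx.1, hφ2]⟩
    have hwx : φ y < φ x := by rw [hyw]; linarith [hx.1]
    have hyx : y < x := by
      by_contra h
      push_neg at h
      rcases eq_or_lt_of_le h with h' | h'
      · rw [h'] at hwx; exact lt_irrefl _ hwx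
      · exact lt_asymm hwx (hmono hx hy h')
    have h3 : φ x - φ y ≤ x - y := by
      have := le_trans (le_abs_self _) (hne x hx y hy)
      rwa [abs_of_pos (by linarith : (0:ℝ) < x - y)] at this
    rw [hyw] at h3
    linarith [hy.1]
  linarith [h1, h2, hlen]

lemma affine_of_anti {φ : ℝ → ℝ} {α β γ δ : ℝ} (hαβ : α < β) (hlen : β - α = δ - γ)
    (hmaps : ∀ x ∈ Set.Ioo α β, φ x ∈ Set.Ioo γ δ)
    (hsurj : ∀ w ∈ Set.Ioo γ δ, ∃ x ∈ Set.Ioo α β, φ x = w)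
    (hne : ∀ x ∈ Set.Ioo α β, ∀ y ∈ Set.Ioo α β, |φ x - φ y| ≤ |x - y|)
    (hanti : StrictAntiOn φ (Set.Ioo α β)) :
    ∀ x ∈ Set.Ioo α β, φ x = (γ + β) - x := by
  intro x hx
  obtain ⟨hφ1, hφ2⟩ := hmaps x hx
  have h1 : δ - φ x ≤ x - α := by
    by_contra hcon
    push_neg at hcon
    obtain ⟨y, hy, hyw⟩ := hsurj ((φ x + (x - α) + δ)/2)
      ⟨lt_trans hφ1 (by linarith [hx.1]), by linarith [hx.1]⟩
    have hwx : φ x < φ y := by rw [hyw]; linarith [hx.1]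
    have hyx : y < x := by
      by_contra h
      push_neg at h
      rcases eq_or_lt_of_le h with h' | h'
      · rw [h'] at hwx; exact lt_irrefl _ hwx
      · exact lt_asymm hwx (hanti hx hy h')
    have h3 : φ y - φ x ≤ x - y := by
      have := le_trans (le_abs_self _) (hne y hy x hx)
      rwa [abs_sub_comm, abs_of_pos (by linarith : (0:ℝ) < x - y)] at this
    rw [hyw] at h3
    linarith [hy.1]
  have h2 : φ x - γ ≤ β - x := by
    by_contra hcon
    push_neg at hcon
    obtain ⟨y, hy, hyw⟩ := hsurj ((γ + (φ x - (β - x)))/2)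
      ⟨by linarith [hx.2], lt_trans (by linarith [hx.2]) hφ2⟩
    have hwx : φ y < φ x := by rw [hyw]; linarith [hx.2]
    have hxy : x < y := by
      by_contra h
      push_neg at h
      rcases eq_or_lt_of_le h with h' | h'
      · rw [h'] at hwx; exact lt_irrefl _ hwx
      · exact lt_asymm hwx (hanti hy hx h')
    have h3 : φ x - φ y ≤ y - x := by
      have := le_trans (le_abs_self _) (hne x hx y hy)
      rwa [abs_sub_comm, abs_of_pos (by linarith : (0:ℝ) < y - x)] at this
    rw [hyw] at h3
    linarith [hy.2]
  linarith [h1, h2, hlen]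

set_option maxHeartbeats 2000000 in
theorem equal_open_intervals_plastic (a b : ℤ → ℝ)
    (hab : ∀ i : ℤ, a i < b i) (hba : ∀ i : ℤ, b i < a (i + 1))
    (hlen : ∀ i : ℤ, b i - a i = b (i + 1) - a (i + 1))
    (hgap : ∀ i : ℤ, a (i + 1) - b i = a i - b (i - 1)) :
    Plastic (⋃ i : ℤ, Set.Ioo (a i) (b i)) := by
  intro φ hbij hne
  have hamono : StrictMono a := strictMono_int_of_lt_succ fun n => (hab n).trans (hba n)
  have hbmono : StrictMono b := strictMono_int_of_lt_succ fun n => (hba n).trans (hab (n+1))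
  have hL : ∀ i : ℤ, b i - a i = b 0 - a 0 := by
    intro i
    induction i using Int.induction_on with
    | zero => rfl
    | succ n ih => rw [← hlen n]; exact ih
    | pred n ih =>
      have h := hlen (-(n:ℤ) - 1)
      simp only [show (-(n:ℤ) - 1) + 1 = -(n:ℤ) from by ring] at h
      rw [h]; exact ih
  have hstep : ∀ i : ℤ, a (i+1) - a i = a i - a (i-1) := by
    intro i
    have h1 := hgap i
    have h2 := hL i
    have h3 := hL (i - 1)
    linarith
  have hp : ∀ i : ℤ, a (i+1) - a i = a 1 - a 0 := by
    intro i
    induction i using Int.induction_on with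
    | zero => rfl
    | succ n ih =>
      have h := hstep ((n:ℤ)+1)
      simp only [show ((n:ℤ) + 1) - 1 = (n:ℤ) from by ring] at h
      rw [h]; exact ih
    | pred n ih =>
      have h := hstep (-(n:ℤ))
      simp only [show (-(n:ℤ) - 1) + 1 = -(n:ℤ) from by ring]
      rw [← h]; exact ih
  have ha' : ∀ i : ℤ, a i = a 0 + (i : ℝ) * (a 1 - a 0) := by
    intro i
    induction i using Int.induction_on with
    | zero => simp
    | succ n ih =>
      have h := hp (n:ℤ)
      push_cast
      push_cast at ih
      linarith [h, ih]
    | pred n ih =>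
      have h := hp (-(n:ℤ) - 1)
      simp only [show (-(n:ℤ) - 1) + 1 = -(n:ℤ) from by ring] at h
      push_cast
      push_cast at ih
      linarith [h, ih]
  have hb' : ∀ i : ℤ, b i = a i + (b 0 - a 0) := fun i => by linarith [hL i]
  have hLpos : (0:ℝ) < b 0 - a 0 := by linarith [hab 0]
  have hpL : b 0 - a 0 < a 1 - a 0 := by have h := hba 0; norm_num at h; linarith
  have hppos : (0:ℝ) < a 1 - a 0 := by linarith
  have hsubA : ∀ i : ℤ, Set.Ioo (a i) (b i) ⊆ ⋃ j : ℤ, Set.Ioo (a j) (b j) :=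
    fun i => Set.subset_iUnion (fun j => Set.Ioo (a j) (b j)) i
  have h_ne' : ∀ x ∈ (⋃ i : ℤ, Set.Ioo (a i) (b i)), ∀ y ∈ (⋃ i : ℤ, Set.Ioo (a i) (b i)),
      |φ x - φ y| ≤ |x - y| := by
    intro x hx y hy
    have := hne x hx y hy
    rwa [Real.dist_eq, Real.dist_eq] at this
  have hφc : ContinuousOn φ (⋃ i : ℤ, Set.Ioo (a i) (b i)) := by
    apply LipschitzOnWith.continuousOn (K := 1)
    apply LipschitzOnWith.of_dist_le_mul
    intro x hx y hy
    rw [NNReal.coe_one, one_mul]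
    exact hne x hx y hy
  have huniq : ∀ (i j : ℤ) (x : ℝ), x ∈ Set.Ioo (a i) (b i) → x ∈ Set.Ioo (a j) (b j) → i = j := by
    intro i j x hxi hxj
    by_contra hne2
    rcases lt_or_gt_of_ne hne2 with h | h
    · have : b i < a j := lt_of_lt_of_le (hba i) (hamono.monotone (by omega : i + 1 ≤ j))
      linarith [hxi.2, hxj.1]
    · have : b j < a i := lt_of_lt_of_le (hba j) (hamono.monotone (by omega : j + 1 ≤ i))
      linarith [hxj.2, hxi.1]
  have hbnotin : ∀ j : ℤ, b j ∉ (⋃ i : ℤ, Set.Ioo (a i) (b i)) := by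
    intro j hj
    rw [Set.mem_iUnion] at hj
    obtain ⟨m, hm⟩ := hj
    rcases le_or_gt m j with h | h
    · exact absurd hm.2 (not_lt.2 (hbmono.monotone h))
    · have : b j < a m := lt_of_lt_of_le (hba j) (hamono.monotone (by omega))
      linarith [hm.1]
  have key_ivt : ∀ (i jx jy : ℤ) (x y : ℝ), x ∈ Set.Ioo (a i) (b i) → y ∈ Set.Ioo (a i) (b i) →
      jx < jy → φ x ∈ Set.Ioo (a jx) (b jx) → φ y ∈ Set.Ioo (a jy) (b jy) → False := by
    intro i jx jy x y hx hy hjj hφx hφy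
    have hbja : b jx < a jy := lt_of_lt_of_le (hba jx) (hamono.monotone (by omega : jx + 1 ≤ jy))
    have h1 : φ x < b jx := hφx.2
    have h2 : b jx < φ y := lt_trans hbja hφy.1
    rcases le_total x y with hxy | hyx
    · have hsub : Set.Icc x y ⊆ Set.Ioo (a i) (b i) :=
        fun t ht => ⟨lt_of_lt_of_le hx.1 ht.1, lt_of_le_of_lt ht.2 hy.2⟩
      obtain ⟨z, hz, hφz⟩ := intermediate_value_Icc hxy (hφc.mono (hsub.trans (hsubA i)))
        ⟨h1.le, h2.le⟩
      exact hbnotin jx (by rw [← hφz]; exact hbij.mapsTo (hsubA i (hsub hz)))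
    · have hsub : Set.Icc y x ⊆ Set.Ioo (a i) (b i) :=
        fun t ht => ⟨lt_of_lt_of_le hy.1 ht.1, lt_of_le_of_lt ht.2 hx.2⟩
      obtain ⟨z, hz, hφz⟩ := intermediate_value_Icc' hyx (hφc.mono (hsub.trans (hsubA i)))
        ⟨h1.le, h2.le⟩
      exact hbnotin jx (by rw [← hφz]; exact hbij.mapsTo (hsubA i (hsub hz)))
  have hsame : ∀ (i : ℤ) (x y : ℝ), x ∈ Set.Ioo (a i) (b i) → y ∈ Set.Ioo (a i) (b i) →
      ∀ jx jy, φ x ∈ Set.Ioo (a jx) (b jx) → φ y ∈ Set.Ioo (a jy) (b jy) → jx = jy := by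
    intro i x y hx hy jx jy hjx hjy
    rcases lt_trichotomy jx jy with h | h | h
    · exact absurd (key_ivt i jx jy x y hx hy h hjx hjy) not_false
    · exact h
    · exact absurd (key_ivt i jy jx y x hy hx h hjy hjx) not_false
  have hmid : ∀ i : ℤ, (a i + b i)/2 ∈ Set.Ioo (a i) (b i) :=
    fun i => ⟨by linarith [hab i], by linarith [hab i]⟩
  have hq : ∀ i : ℤ, (3*a i + b i)/4 ∈ Set.Ioo (a i) (b i) :=
    fun i => ⟨by linarith [hab i], by linarith [hab i]⟩
  have hφmid : ∀ i : ℤ, ∃ j : ℤ, φ ((a i + b i)/2) ∈ Set.Ioo (a j) (b j) := by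
    intro i
    have := hbij.mapsTo (hsubA i (hmid i))
    rwa [Set.mem_iUnion] at this
  choose σ hσmid using hφmid
  have hσ : ∀ (i : ℤ), ∀ x ∈ Set.Ioo (a i) (b i), φ x ∈ Set.Ioo (a (σ i)) (b (σ i)) := by
    intro i x hx
    have hxA := hbij.mapsTo (hsubA i hx)
    rw [Set.mem_iUnion] at hxA
    obtain ⟨j, hj⟩ := hxA
    have : j = σ i := hsame i x ((a i + b i)/2) hx (hmid i) j (σ i) hj (hσmid i)
    rwa [← this]
  have hopen : ∀ i : ℤ, IsOpen (φ '' Set.Ioo (a i) (b i)) := fun i =>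
    isOpen_image_ioo (hφc.mono (hsubA i))
      (ioo_dichotomy (hφc.mono (hsubA i)) (hbij.injOn.mono (hsubA i)))
  have hσinj : Function.Injective σ := by
    intro i i' hii'
    by_contra hne2
    have hpre := isPreconnected_Ioo (a := a (σ i)) (b := b (σ i))
    have hcover : Set.Ioo (a (σ i)) (b (σ i)) ⊆
        (φ '' Set.Ioo (a i) (b i)) ∪ (⋃ k : ℤ, ⋃ (_ : k ≠ i), φ '' Set.Ioo (a k) (b k)) := by
      intro w hw
      obtain ⟨x, hxA, hφx⟩ := hbij.surjOn (hsubA (σ i) hw)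
      rw [Set.mem_iUnion] at hxA
      obtain ⟨k, hk⟩ := hxA
      by_cases hki : k = i
      · left; exact ⟨x, hki ▸ hk, hφx⟩
      · right
        exact Set.mem_iUnion.2 ⟨k, Set.mem_iUnion.2 ⟨hki, ⟨x, hk, hφx⟩⟩⟩
    have h1 : (Set.Ioo (a (σ i)) (b (σ i)) ∩ (φ '' Set.Ioo (a i) (b i))).Nonempty :=
      ⟨φ ((a i + b i)/2), hσmid i, ⟨_, hmid i, rfl⟩⟩
    have h2 : (Set.Ioo (a (σ i)) (b (σ i)) ∩
        (⋃ k : ℤ, ⋃ (_ : k ≠ i), φ '' Set.Ioo (a k) (b k))).Nonempty := by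
      refine ⟨φ ((a i' + b i')/2), ?_, ?_⟩
      · have := hσmid i'; rwa [← hii'] at this
      · exact Set.mem_iUnion.2 ⟨i', Set.mem_iUnion.2 ⟨fun h => hne2 h.symm, ⟨_, hmid i', rfl⟩⟩⟩
    obtain ⟨w, hwI, hwU, hwV⟩ := hpre _ _ (hopen i)
      (isOpen_iUnion fun k => isOpen_iUnion fun _ => hopen k) hcover h1 h2
    obtain ⟨x, hx, hφx⟩ := hwU
    rw [Set.mem_iUnion] at hwV
    obtain ⟨k, hk⟩ := hwV
    rw [Set.mem_iUnion] at hk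
    obtain ⟨hki, x', hx', hφx'⟩ := hk
    have hxx : x = x' := hbij.injOn (hsubA i hx) (hsubA k hx') (by rw [hφx, hφx'])
    exact hki (huniq k i x' hx' (by rw [← hxx]; exact hx))
  have himgsub : ∀ i : ℤ, ∀ w ∈ Set.Ioo (a (σ i)) (b (σ i)),
      ∃ x ∈ Set.Ioo (a i) (b i), φ x = w := by
    intro i w hw
    obtain ⟨x, hxA, hφx⟩ := hbij.surjOn (hsubA (σ i) hw)
    rw [Set.mem_iUnion] at hxA
    obtain ⟨k, hk⟩ := hxA
    have h1 : φ x ∈ Set.Ioo (a (σ k)) (b (σ k)) := hσ k x hk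
    have h2 : σ k = σ i := huniq (σ k) (σ i) w (by rw [← hφx]; exact h1) hw
    have h3 : k = i := hσinj h2
    exact ⟨x, h3 ▸ hk, hφx⟩
  have hform : ∀ i : ℤ, (∀ x ∈ Set.Ioo (a i) (b i), φ x = x + (a (σ i) - a i)) ∨
      (∀ x ∈ Set.Ioo (a i) (b i), φ x = (a (σ i) + b i) - x) := by
    intro i
    have hcn := hφc.mono (hsubA i)
    have hin := hbij.injOn.mono (hsubA i)
    have hlen' : b i - a i = b (σ i) - a (σ i) := by rw [hL i, hL (σ i)]
    have hnei : ∀ x ∈ Set.Ioo (a i) (b i), ∀ y ∈ Set.Ioo (a i) (b i), |φ x - φ y| ≤ |x - y| :=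
      fun x hx y hy => h_ne' x (hsubA i hx) y (hsubA i hy)
    rcases ioo_dichotomy hcn hin with hm | hm
    · left
      intro x hx
      have := affine_of_mono (hab i) hlen' (hσ i) (himgsub i) hnei hm x hx
      linarith [this]
    · right
      intro x hx
      have := affine_of_anti (hab i) hlen' (hσ i) (himgsub i) hnei hm x hx
      linarith [this]
  have hadj : ∀ i : ℤ,
      (∃ c : ℝ, (∀ x ∈ Set.Ioo (a i) (b i), φ x = x + c) ∧
        (∀ x ∈ Set.Ioo (a (i+1)) (b (i+1)), φ x = x + c)) ∨
      (∃ C : ℝ, (∀ x ∈ Set.Ioo (a i) (b i), φ x = C - x) ∧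
        (∀ x ∈ Set.Ioo (a (i+1)) (b (i+1)), φ x = C - x)) := by
    intro i
    have hk : σ (i+1) ≠ σ i := fun h => by have := hσinj h; omega
    have hx0 : a i + 3*(b 0 - a 0)/4 ∈ Set.Ioo (a i) (b i) :=
      ⟨by linarith, by linarith [hb' i]⟩
    have hy0 : a (i+1) + (b 0 - a 0)/4 ∈ Set.Ioo (a (i+1)) (b (i+1)) :=
      ⟨by linarith, by linarith [hb' (i+1)]⟩
    have H := h_ne' _ (hsubA i hx0) _ (hsubA (i+1) hy0)
    have hyx : |a i + 3*(b 0 - a 0)/4 - (a (i+1) + (b 0 - a 0)/4)|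
        = (a (i+1) + (b 0 - a 0)/4) - (a i + 3*(b 0 - a 0)/4) := by
      rw [abs_sub_comm]
      exact abs_of_pos (by linarith [hp i, hpL])
    rw [hyx] at H
    have e2 := ha' (i+1); push_cast at e2
    have e1 := ha' i
    have e3 := ha' (σ i)
    have e4 := ha' (σ (i+1))
    have f1 := hb' i
    have f2 := hb' (i+1)
    rcases hform i with h1 | h1 <;> rcases hform (i+1) with h2 | h2
    · -- inc inc
      rw [h1 _ hx0, h2 _ hy0] at H
      obtain ⟨H1, H2⟩ := abs_le.1 H
      have hidx : σ (i+1) = σ i + 1 := by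
        by_contra hne2
        have hc2 : σ (i+1) ≤ σ i - 1 ∨ σ i + 2 ≤ σ (i+1) := by omega
        rcases hc2 with hc | hc
        · have hcr : ((σ (i+1) : ℝ)) ≤ (σ i : ℝ) - 1 := by exact_mod_cast hc
          have hprod : 0 ≤ ((σ i : ℝ) - (σ (i+1) : ℝ) - 1) * (a 1 - a 0) :=
            mul_nonneg (by linarith) (by linarith)
          linarith [hprod, e1, e2, e3, e4, hp i, hLpos]
        · have hcr : ((σ i : ℝ)) + 2 ≤ (σ (i+1) : ℝ) := by exact_mod_cast hc
          have hprod : 0 ≤ ((σ (i+1) : ℝ) - (σ i : ℝ) - 2) * (a 1 - a 0) :=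
            mul_nonneg (by linarith) (by linarith)
          linarith [hprod, e1, e2, e3, e4, hp i, hLpos, hppos]
      have hkey : a (σ (i+1)) - a (i+1) = a (σ i) - a i := by
        have e5 := ha' (σ i + 1); push_cast at e5
        rw [hidx]
        linarith [e5, e3, e2, e1, hp i]
      exact Or.inl ⟨a (σ i) - a i, h1, fun x hx => by rw [h2 x hx, hkey]⟩
    · -- inc dec : impossible
      exfalso
      rw [h1 _ hx0, h2 _ hy0] at H
      obtain ⟨H1, H2⟩ := abs_le.1 H
      have hc2 : σ (i+1) ≤ σ i - 1 ∨ σ i + 1 ≤ σ (i+1) := by omega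
      rcases hc2 with hc | hc
      · have hcr : ((σ (i+1) : ℝ)) ≤ (σ i : ℝ) - 1 := by exact_mod_cast hc
        have hprod : 0 ≤ ((σ i : ℝ) - (σ (i+1) : ℝ) - 1) * (a 1 - a 0) :=
          mul_nonneg (by linarith) (by linarith)
        linarith [hprod, e1, e2, e3, e4, f1, f2, hp i, hLpos]
      · have hcr : ((σ i : ℝ)) + 1 ≤ (σ (i+1) : ℝ) := by exact_mod_cast hc
        have hprod : 0 ≤ ((σ (i+1) : ℝ) - (σ i : ℝ) - 1) * (a 1 - a 0) :=
          mul_nonneg (by linarith) (by linarith)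
        linarith [hprod, e1, e2, e3, e4, f1, f2, hp i, hLpos]
    · -- dec inc : impossible
      exfalso
      rw [h1 _ hx0, h2 _ hy0] at H
      obtain ⟨H1, H2⟩ := abs_le.1 H
      have hc2 : σ (i+1) ≤ σ i - 1 ∨ σ i + 1 ≤ σ (i+1) := by omega
      rcases hc2 with hc | hc
      · have hcr : ((σ (i+1) : ℝ)) ≤ (σ i : ℝ) - 1 := by exact_mod_cast hc
        have hprod : 0 ≤ ((σ i : ℝ) - (σ (i+1) : ℝ) - 1) * (a 1 - a 0) :=
          mul_nonneg (by linarith) (by linarith)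
        linarith [hprod, e1, e2, e3, e4, f1, f2, hp i, hLpos]
      · have hcr : ((σ i : ℝ)) + 1 ≤ (σ (i+1) : ℝ) := by exact_mod_cast hc
        have hprod : 0 ≤ ((σ (i+1) : ℝ) - (σ i : ℝ) - 1) * (a 1 - a 0) :=
          mul_nonneg (by linarith) (by linarith)
        linarith [hprod, e1, e2, e3, e4, f1, f2, hp i, hLpos]
    · -- dec dec
      rw [h1 _ hx0, h2 _ hy0] at H
      obtain ⟨H1, H2⟩ := abs_le.1 H
      have hidx : σ (i+1) = σ i - 1 := by
        by_contra hne2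
        have hc2 : σ (i+1) ≤ σ i - 2 ∨ σ i + 1 ≤ σ (i+1) := by omega
        rcases hc2 with hc | hc
        · have hcr : ((σ (i+1) : ℝ)) ≤ (σ i : ℝ) - 2 := by exact_mod_cast hc
          have hprod : 0 ≤ ((σ i : ℝ) - (σ (i+1) : ℝ) - 2) * (a 1 - a 0) :=
            mul_nonneg (by linarith) (by linarith)
          linarith [hprod, e1, e2, e3, e4, f1, f2, hp i, hLpos, hppos]
        · have hcr : ((σ i : ℝ)) + 1 ≤ (σ (i+1) : ℝ) := by exact_mod_cast hc
          have hprod : 0 ≤ ((σ (i+1) : ℝ) - (σ i : ℝ) - 1) * (a 1 - a 0) :=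
            mul_nonneg (by linarith) (by linarith)
          linarith [hprod, e1, e2, e3, e4, f1, f2, hp i, hLpos, hppos]
      have hkey : a (σ (i+1)) + b (i+1) = a (σ i) + b i := by
        have e5 := ha' (σ i - 1); push_cast at e5
        rw [hidx]
        linarith [e5, e3, f1, f2, e1, e2, hp i]
      exact Or.inr ⟨a (σ i) + b i, h1, fun x hx => by rw [h2 x hx, hkey]⟩
  rcases hadj 0 with ⟨c, hc0, hc1⟩ | ⟨C, hC0, hC1⟩
  · have hglob : ∀ i : ℤ, ∀ x ∈ Set.Ioo (a i) (b i), φ x = x + c := by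
      intro i
      induction i using Int.induction_on with
      | zero => exact hc0
      | succ n ih =>
        rcases hadj n with ⟨c', h1, h2⟩ | ⟨C', h1, h2⟩
        · have hcc : c' = c := by
            have u1 := h1 _ (hmid n)
            have u2 := ih _ (hmid n)
            linarith
          intro x hx
          rw [h2 x hx, hcc]
        · exfalso
          have u1 := h1 _ (hmid n)
          have u2 := ih _ (hmid n)
          have u3 := h1 _ (hq n)
          have u4 := ih _ (hq n)
          have := hab n
          linarith
      | pred n ih =>
        rcases hadj (-(n:ℤ) - 1) with ⟨c', h1, h2⟩ | ⟨C', h1, h2⟩ <;>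
          simp only [show (-(n:ℤ) - 1) + 1 = -(n:ℤ) from by ring] at h2
        · have hcc : c' = c := by
            have u1 := h2 _ (hmid (-(n:ℤ)))
            have u2 := ih _ (hmid (-(n:ℤ)))
            linarith
          intro x hx
          rw [h1 x hx, hcc]
        · exfalso
          have u1 := h2 _ (hmid (-(n:ℤ)))
          have u2 := ih _ (hmid (-(n:ℤ)))
          have u3 := h2 _ (hq (-(n:ℤ)))
          have u4 := ih _ (hq (-(n:ℤ)))
          have := hab (-(n:ℤ))
          linarith
    intro x hx y hy
    rw [Set.mem_iUnion] at hx hy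
    obtain ⟨i, hi⟩ := hx
    obtain ⟨j, hj⟩ := hy
    rw [Real.dist_eq, Real.dist_eq, hglob i x hi, hglob j y hj]
    congr 1
    ring
  · have hglob : ∀ i : ℤ, ∀ x ∈ Set.Ioo (a i) (b i), φ x = C - x := by
      intro i
      induction i using Int.induction_on with
      | zero => exact hC0
      | succ n ih =>
        rcases hadj n with ⟨c', h1, h2⟩ | ⟨C', h1, h2⟩
        · exfalso
          have u1 := h1 _ (hmid n)
          have u2 := ih _ (hmid n)
          have u3 := h1 _ (hq n)
          have u4 := ih _ (hq n)
          have := hab n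
          linarith
        · have hCC : C' = C := by
            have u1 := h1 _ (hmid n)
            have u2 := ih _ (hmid n)
            linarith
          intro x hx
          rw [h2 x hx, hCC]
      | pred n ih =>
        rcases hadj (-(n:ℤ) - 1) with ⟨c', h1, h2⟩ | ⟨C', h1, h2⟩ <;>
          simp only [show (-(n:ℤ) - 1) + 1 = -(n:ℤ) from by ring] at h2
        · exfalso
          have u1 := h2 _ (hmid (-(n:ℤ)))
          have u2 := ih _ (hmid (-(n:ℤ)))
          have u3 := h2 _ (hq (-(n:ℤ)))
          have u4 := ih _ (hq (-(n:ℤ)))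
          have := hab (-(n:ℤ))
          linarith
        · have hCC : C' = C := by
            have u1 := h2 _ (hmid (-(n:ℤ)))
            have u2 := ih _ (hmid (-(n:ℤ)))
            linarith
          intro x hx
          rw [h1 x hx, hCC]
    intro x hx y hy
    rw [Set.mem_iUnion] at hx hy
    obtain ⟨i, hi⟩ := hx
    obtain ⟨j, hj⟩ := hy
    rw [Real.dist_eq, Real.dist_eq, hglob i x hi, hglob j y hj]
    rw [show C - x - (C - y) = -(x - y) from by ring, abs_neg]
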